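/- For every θ ∈ (0,1), the function x ↦ θ·(1−(1−x)^{1/θ})/x is strictly decreasing on the interval (0,1). -/

import Mathlib

/-- For `θ ∈ (0,1)` the oligopsony markdown `x ↦ θ·(1−(1−x)^{1/θ})/x`
is strictly decreasing on `(0,1)`. -/
theorem stmt5 (θ : ℝ) (hθ : θ ∈ Set.Ioo (0:ℝ) 1) :
    StrictAntiOn (fun x : ℝ => θ * (1 - (1 - x) ^ (1 / θ)) / x) (Set.Ioo 0 1) := by
  obtain ⟨hθ0, hθ1⟩ := hθ
  set p : ℝ := 1 / θ with hp
  have hp1 : 1 < p := one_lt_one_div hθ0 hθ1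
  apply strictAntiOn_of_deriv_neg (convex_Ioo 0 1)
  · apply ContinuousOn.div
    · apply ContinuousOn.mul continuousOn_const
      apply ContinuousOn.sub continuousOn_const
      intro x hx
      have h1x : (1:ℝ) - x ≠ 0 := by have := hx.2; have h2 := hx.2; intro h; linarith
      exact ((Real.continuousAt_rpow_const (1-x) p (Or.inl h1x)).comp
        ((continuous_const.sub continuous_id).continuousAt : ContinuousAt (fun x : ℝ => 1 - x) x)).continuousWithinAt
    · exact continuous_id.continuousOn
    · intro x hx; exact ne_of_gt hx.1
  · rw [interior_Ioo]
    intro x hx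
    have hx0 : (0:ℝ) < x := hx.1
    have h1x : (0:ℝ) < 1 - x := by linarith [hx.2]
    have h1 : HasDerivAt (fun x : ℝ => (1 - x) ^ p) (-(p * (1 - x) ^ (p - 1))) x := by
      have hb := (Real.hasDerivAt_rpow_const (x := 1 - x) (p := p) (Or.inl h1x.ne')).comp x
        ((hasDerivAt_id x).const_sub 1)
      simpa [Function.comp_def] using hb
    have h2 : HasDerivAt (fun x : ℝ => θ * (1 - (1 - x) ^ p)) (θ * (p * (1 - x) ^ (p - 1))) x := by
      simpa using ((hasDerivAt_const x (1:ℝ)).sub h1).const_mul θ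
    have hd : HasDerivAt (fun x : ℝ => θ * (1 - (1 - x) ^ p) / x)
        ((θ * (p * (1 - x) ^ (p - 1)) * x - θ * (1 - (1 - x) ^ p) * 1) / x ^ 2) x := by
      simpa [Pi.div_def] using h2.div (hasDerivAt_id x) hx0.ne'
    rw [hd.deriv]
    -- key inequality via strict Bernoulli
    set A : ℝ := (1 - x) ^ p with hA
    set B : ℝ := (1 - x) ^ (p - 1) with hB
    have hApos : 0 < A := Real.rpow_pos_of_pos h1x p
    have hBpos : 0 < B := Real.rpow_pos_of_pos h1x (p - 1)
    have hAB : A = B * (1 - x) := by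
      rw [hA, hB, ← Real.rpow_add_one h1x.ne' (p - 1)]; ring_nf
    have hs : (0:ℝ) < (1 - x)⁻¹ - 1 := by
      have : (1:ℝ) < (1 - x)⁻¹ := one_lt_inv₀ h1x |>.2 (by linarith)
      linarith
    have hbern : 1 + p * ((1 - x)⁻¹ - 1) < (1 + ((1 - x)⁻¹ - 1)) ^ p :=
      one_add_mul_self_lt_rpow_one_add (by linarith) hs.ne' hp1
    have hinv : (1 + ((1 - x)⁻¹ - 1)) ^ p = A⁻¹ := by
      rw [show 1 + ((1 - x)⁻¹ - 1) = (1 - x)⁻¹ by ring, ← Real.inv_rpow h1x.le]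
    rw [hinv] at hbern
    -- multiply through by A
    have key : A + p * B * x < 1 := by
      have h := mul_lt_mul_of_pos_left hbern hApos
      rw [mul_inv_cancel₀ hApos.ne'] at h
      have hABinv : A * (1 - x)⁻¹ = B := by
        rw [hAB]; field_simp
      nlinarith [h]
    have hnum : θ * (p * B) * x - θ * (1 - A) * 1 < 0 := by nlinarith
    exact div_neg_of_neg_of_pos hnum (by positivity)
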